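/- If p and p+2 are both prime with p ≥ 5, then φ(p−1) < φ(p+1) if and only if (1/2)·∏_{q | p−1, q ≥ 5, q prime} (1 − 1/q) < (1/3)·∏_{q | p+1, q ≥ 5, q prime} (1 − 1/q). -/

import Mathlib

theorem stmt_5 (p : ℕ) (hp : p.Prime) (hp2 : (p + 2).Prime) (h5 : 5 ≤ p) :
    Nat.totient (p - 1) < Nat.totient (p + 1) ↔
      (1 / 2 : ℚ) * ∏ q ∈ (p - 1).primeFactors.filter (fun q => 5 ≤ q), (1 - 1 / (q : ℚ)) <
        (1 / 3 : ℚ) * ∏ q ∈ (p + 1).primeFactors.filter (fun q => 5 ≤ q), (1 - 1 / (q : ℚ)) := by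
  -- basic arithmetic facts
  have hodd : p % 2 = 1 := by
    rcases Nat.Prime.eq_two_or_odd hp with h | h
    · omega
    · exact h
  have hm3 : p % 3 = 2 := by
    have h1 : p % 3 ≠ 0 := by
      intro h
      have : (3 : ℕ) ∣ p := Nat.dvd_of_mod_eq_zero h
      rcases (Nat.Prime.eq_one_or_self_of_dvd hp 3 this) with h' | h' <;> omega
    have h2 : (p + 2) % 3 ≠ 0 := by
      intro h
      have : (3 : ℕ) ∣ (p + 2) := Nat.dvd_of_mod_eq_zero h
      rcases (Nat.Prime.eq_one_or_self_of_dvd hp2 3 this) with h' | h' <;> omega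
    omega
  have hd2a : 2 ∣ p - 1 := by omega
  have hd2b : 2 ∣ p + 1 := by omega
  have hd3b : 3 ∣ p + 1 := by omega
  have hnd3a : ¬ (3 ∣ p - 1) := by omega
  have hne1 : p - 1 ≠ 0 := by omega
  have hne2 : p + 1 ≠ 0 := by omega
  -- membership facts
  have h2a : 2 ∈ (p - 1).primeFactors :=
    Nat.mem_primeFactors.mpr ⟨Nat.prime_two, hd2a, hne1⟩
  have h2b : 2 ∈ (p + 1).primeFactors :=
    Nat.mem_primeFactors.mpr ⟨Nat.prime_two, hd2b, hne2⟩
  have h3b : 3 ∈ ((p + 1).primeFactors.erase 2) := by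
    refine Finset.mem_erase.mpr ⟨by norm_num, ?_⟩
    exact Nat.mem_primeFactors.mpr ⟨Nat.prime_three, hd3b, hne2⟩
  -- filter descriptions
  have hA : (p - 1).primeFactors.filter (fun q => 5 ≤ q) = (p - 1).primeFactors.erase 2 := by
    ext q
    simp only [Finset.mem_filter, Finset.mem_erase]
    constructor
    · rintro ⟨hq, hq5⟩; exact ⟨by omega, hq⟩
    · rintro ⟨hq2, hq⟩
      refine ⟨hq, ?_⟩
      have hqp := Nat.prime_of_mem_primeFactors hq
      have h2le := hqp.two_le
      have hq3 : q ≠ 3 := by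
        intro h; subst h; exact hnd3a (Nat.dvd_of_mem_primeFactors hq)
      have hq4 : q ≠ 4 := by intro h; subst h; norm_num at hqp
      omega
  have hB : (p + 1).primeFactors.filter (fun q => 5 ≤ q) =
      ((p + 1).primeFactors.erase 2).erase 3 := by
    ext q
    simp only [Finset.mem_filter, Finset.mem_erase]
    constructor
    · rintro ⟨hq, hq5⟩; exact ⟨by omega, by omega, hq⟩
    · rintro ⟨hq3, hq2, hq⟩
      refine ⟨hq, ?_⟩
      have hqp := Nat.prime_of_mem_primeFactors hq
      have h2le := hqp.two_le
      have hq4 : q ≠ 4 := by intro h; subst h; norm_num at hqp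
      omega
  set P1 : ℚ := ∏ q ∈ (p - 1).primeFactors.filter (fun q => 5 ≤ q), (1 - 1 / (q : ℚ)) with hP1
  set P2 : ℚ := ∏ q ∈ (p + 1).primeFactors.filter (fun q => 5 ≤ q), (1 - 1 / (q : ℚ)) with hP2
  -- totient formulas
  have eq1 : (Nat.totient (p - 1) : ℚ) = ((p - 1 : ℕ) : ℚ) * ((1/2) * P1) := by
    rw [Nat.totient_eq_mul_prod_factors, ← Finset.mul_prod_erase _ _ h2a]
    rw [hP1, hA]
    push_cast
    norm_num [one_div]
  have eq2 : (Nat.totient (p + 1) : ℚ) = ((p + 1 : ℕ) : ℚ) * ((1/3) * P2) := by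
    rw [Nat.totient_eq_mul_prod_factors, ← Finset.mul_prod_erase _ _ h2b,
      ← Finset.mul_prod_erase _ _ h3b]
    rw [hP2, hB]
    push_cast
    norm_num [one_div]
    left; ring
  -- bounds on P2
  have hP2pos : 0 < P2 := by
    apply Finset.prod_pos
    intro q hq
    have : (5 : ℚ) ≤ q := by
      exact_mod_cast (Finset.mem_filter.mp hq).2
    have : (0:ℚ) < q := by linarith
    rw [sub_pos, div_lt_one this]
    linarith
  have hP2le : P2 ≤ 1 := by
    apply Finset.prod_le_one
    · intro q hq
      have : (5 : ℚ) ≤ q := by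
        exact_mod_cast (Finset.mem_filter.mp hq).2
      have : (0:ℚ) < q := by linarith
      have := div_nonneg (le_of_lt one_pos) (le_of_lt this)
      linarith [div_le_one_of_le₀ (by linarith : (1:ℚ) ≤ q) (by linarith)]
    · intro q hq
      have : (5 : ℚ) ≤ q := by
        exact_mod_cast (Finset.mem_filter.mp hq).2
      have hpos : (0:ℚ) < q := by linarith
      have : 1 / (q:ℚ) > 0 := by positivity
      linarith
  have hcast : ((p + 1 : ℕ) : ℚ) = ((p - 1 : ℕ) : ℚ) + 2 := by
    push_cast [Nat.cast_sub (by omega : 1 ≤ p)]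
    ring
  have hcge : (4 : ℚ) ≤ ((p - 1 : ℕ) : ℚ) := by
    have : (4 : ℕ) ≤ p - 1 := by omega
    exact_mod_cast this
  set c : ℚ := ((p - 1 : ℕ) : ℚ)
  constructor
  · intro h
    by_contra hc
    push_neg at hc
    have hlt : (Nat.totient (p - 1) : ℚ) + 1 ≤ (Nat.totient (p + 1) : ℚ) := by
      exact_mod_cast Nat.succ_le_of_lt h
    rw [eq1, eq2, hcast] at hlt
    nlinarith
  · intro h
    have : (Nat.totient (p - 1) : ℚ) < (Nat.totient (p + 1) : ℚ) := by
      rw [eq1, eq2, hcast]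
      nlinarith
    exact_mod_cast this
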